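/- Let ζ = e^{2πi/6} and let D(z) = max{1, |Re(z)|, Im(z)^{-1}} for z ∈ ℍ. If z ∈ ℍ does not lie in the SL₂(ℤ)-orbit of ζ, then every ρ = [[a,b],[c,d]] ∈ SL₂(ℤ) with ρz ∈ 𝓕̄ satisfies max{1, |a|, |b|, |c|, |d|} ≤ 264·D(z)⁹. If z lies in the SL₂(ℤ)-orbit of ζ, then every ρ = [[a,b],[c,d]] ∈ SL₂(ℤ) with ρz ∈ 𝓕̄ satisfies max{1, |a|, |b|, |c|, |d|} ≤ 1056·D(z)⁹. -/

import Mathlib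

open Real Complex

/-- The closed standard fundamental domain
`{τ ∈ ℍ : |Re τ| ≤ 1/2, |τ| ≥ 1}` viewed inside `ℂ`. -/
def inFD (z : ℂ) : Prop :=
  0 < z.im ∧ |z.re| ≤ 1 / 2 ∧ 1 ≤ ‖z‖

/-- The fractional linear (Möbius) action of an integer matrix `[[a,b],[c,d]]` on `ℂ`. -/
noncomputable def moebius (a b c d : ℤ) (τ : ℂ) : ℂ :=
  ((a : ℂ) * τ + (b : ℂ)) / ((c : ℂ) * τ + (d : ℂ))

/-- `D(z) = max {1, |Re z|, (Im z)⁻¹}`. -/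
noncomputable def Dfun (z : ℂ) : ℝ :=
  max 1 (max |z.re| z.im⁻¹)

/-- The multiplicative height of an integer matrix `[[a,b],[c,d]]`,
regarded as a point of `ℚ⁴`. -/
noncomputable def matHeight (a b c d : ℤ) : ℝ :=
  max 1 (max |(a : ℝ)| (max |(b : ℝ)| (max |(c : ℝ)| |(d : ℝ)|)))

/-- `z` lies in the `SL₂(ℤ)`-orbit of `ζ = e^{2πi/6}`. -/
def inOrbitZeta (z : ℂ) : Prop :=
  ∃ a b c d : ℤ, a * d - b * c = 1 ∧
    z = moebius a b c d (Complex.exp (2 * Real.pi * Complex.I / 6))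

set_option maxHeartbeats 1000000 in
lemma key_height_bound (z : ℂ) (hz : 0 < z.im) (a b c d : ℤ)
    (hdet : a * d - b * c = 1) (hFD : inFD (moebius a b c d z)) :
    matHeight a b c d ≤ 9 * Dfun z ^ 2 := by
  obtain ⟨hw0, hwre, hwabs⟩ := hFD
  set x := z.re with hx_def
  set y := z.im with hy_def
  set D := Dfun z with hD_def
  have hD1 : 1 ≤ D := le_max_left _ _
  have hDx : |x| ≤ D := le_trans (le_max_left _ _) (le_max_right _ _)
  have hDy : y⁻¹ ≤ D := le_trans (le_max_right _ _) (le_max_right _ _)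
  have hyD : 1 ≤ y * D := by
    have := (inv_le_iff_one_le_mul₀ hz).mp hDy
    linarith [this]
  have hD0 : (0:ℝ) < D := lt_of_lt_of_le one_pos hD1
  set u : ℂ := (c:ℂ) * z + d with hu_def
  set w : ℂ := moebius a b c d z with hw_def
  -- u ≠ 0
  have hu : u ≠ 0 := by
    rw [hu_def]
    by_cases hc : c = 0
    · have hd : d ≠ 0 := by
        intro hd0; rw [hc, hd0] at hdet; simp at hdet
      rw [hc]
      simpa using (by exact_mod_cast hd : (d:ℂ) ≠ 0)
    · intro h0
      have him0 : ((c:ℂ) * z + d).im = 0 := by rw [h0]; simp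
      simp only [Complex.add_im, Complex.mul_im, Complex.intCast_re,
        Complex.intCast_im, zero_mul, add_zero, mul_zero] at him0
      have hc0 : (c:ℝ) ≠ 0 := by exact_mod_cast hc
      have hcy : (c:ℝ) * z.im = 0 := by linarith [him0]
      rcases mul_eq_zero.mp hcy with h | h
      · exact hc0 h
      · exact (ne_of_gt hz) h
  set N : ℝ := Complex.normSq u with hN_def
  have hN0 : 0 < N := Complex.normSq_pos.mpr hu
  clear_value N w u D y x
  have hu' : ((c:ℂ) * z + d) ≠ 0 := by rw [← hu_def]; exact hu
  have hure : u.re = (c:ℝ) * x + d := by rw [hu_def]; simp [hx_def]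
  have huim : u.im = (c:ℝ) * y := by rw [hu_def]; simp [hy_def]
  have hdetR : (a:ℝ) * d - b * c = 1 := by exact_mod_cast hdet
  -- imaginary part identity
  have hwu : w * u = (a:ℂ) * z + b := by
    rw [hw_def, moebius, ← hu_def, div_mul_cancel₀ _ hu]
  have h1 := congrArg Complex.im hwu
  have h2 := congrArg Complex.re hwu
  simp only [Complex.mul_im, Complex.mul_re, Complex.add_im, Complex.add_re,
    Complex.intCast_re, Complex.intCast_im, mul_zero, zero_mul, add_zero,
    sub_zero, zero_add] at h1 h2
  have hNre : N = u.re * u.re + u.im * u.im := by rw [hN_def, Complex.normSq_apply]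
  rw [← hy_def, hure, huim] at h1
  rw [← hx_def, hure, huim] at h2
  have him : w.im * N = y := by
    rw [hNre, hure, huim]
    linear_combination ((c:ℝ)*x+d) * h1 - ((c:ℝ)*y) * h2 + y * hdetR
  -- w.im ≥ 1/2
  have hwsq : 1 ≤ w.re ^ 2 + w.im ^ 2 := by
    have h := Complex.sq_norm w
    have h1' : (1:ℝ) ≤ ‖w‖ ^ 2 := by nlinarith [hwabs, norm_nonneg w]
    rw [h, Complex.normSq_apply] at h1'
    nlinarith [h1']
  have hwim_half : (1:ℝ)/2 ≤ w.im := by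
    have hre2 : w.re ^ 2 ≤ 1/4 := by
      have := abs_le.mp hwre
      nlinarith [this.1, this.2]
    nlinarith [hwsq, hre2, hw0]
  -- N ≤ 2y
  have hN2y : N ≤ 2 * y := by nlinarith [him, hwim_half, hN0]
  have h9 : (1:ℝ) ≤ 9 * D ^ 2 := by nlinarith [hD1]
  by_cases hc : c = 0
  · -- c = 0 : a = d = ±1
    have had : a * d = 1 := by rw [hc] at hdet; linarith [hdet]
    have hcases := Int.mul_eq_one_iff_eq_one_or_neg_one.mp had
    have hb : |(b:ℝ)| ≤ 2 * D := by
      have hwre_eq : ∃ s : ℝ, (s = 1 ∨ s = -1) ∧ w.re = x + s * b := by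
        rcases hcases with ⟨ha1, hd1⟩ | ⟨ha1, hd1⟩
        · refine ⟨1, Or.inl rfl, ?_⟩
          have hww : w = z + (b:ℂ) := by
            rw [hw_def, moebius, ha1, hd1, hc]; push_cast; simp
          rw [hww, hx_def]
          simp only [Complex.add_re, Complex.intCast_re]; ring
        · refine ⟨-1, Or.inr rfl, ?_⟩
          have hww : w = z - (b:ℂ) := by
            rw [hw_def, moebius, ha1, hd1, hc]; push_cast
            rw [div_eq_iff (by norm_num : (0:ℂ)*z + -1 ≠ 0)]; ring
          rw [hww, hx_def]
          simp only [Complex.sub_re, Complex.intCast_re]; ring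
      obtain ⟨s, hs1, hwre_eq⟩ := hwre_eq
      have hsb : |s * b| ≤ |w.re| + |x| := by
        have hsb' : s * b = w.re - x := by rw [hwre_eq]; ring
        rw [hsb']; exact abs_sub _ _
      have hsb2 : |s * (b:ℝ)| = |(b:ℝ)| := by
        rcases hs1 with h | h <;> rw [h] <;> simp [abs_mul]
      nlinarith [hsb, hsb2, hwre, hDx, hD1]
    have ha1 : |(a:ℝ)| = 1 := by
      rcases hcases with ⟨h, _⟩ | ⟨h, _⟩ <;> rw [h] <;> norm_num
    have hd1 : |(d:ℝ)| = 1 := by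
      rcases hcases with ⟨_, h⟩ | ⟨_, h⟩ <;> rw [h] <;> norm_num
    have hc1 : |(c:ℝ)| = 0 := by rw [hc]; norm_num
    rw [matHeight]
    exact max_le h9 (max_le (by nlinarith [ha1.le]) (max_le (by nlinarith [hb])
      (max_le (by nlinarith [hc1.le]) (by nlinarith [hd1.le]))))
  · -- c ≠ 0
    have hc1 : (1:ℝ) ≤ |(c:ℝ)| := by
      have h : (1:ℤ) ≤ |c| := Int.one_le_abs hc
      have h' : ((1:ℤ):ℝ) ≤ ((|c| : ℤ) : ℝ) := Int.cast_le.mpr h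
      simpa [Int.cast_abs] using h'
    have hc2 : (1:ℝ) ≤ (c:ℝ)^2 := by nlinarith only [hc1, abs_nonneg (c:ℝ), _root_.sq_abs ((c:ℝ))]
    -- c² y² ≤ N
    have hcyN : (c:ℝ)^2 * y^2 ≤ N := by
      rw [hNre, hure, huim]; nlinarith only [sq_nonneg ((c:ℝ)*x + d)]
    -- c² y ≤ 2
    have hcy2 : (c:ℝ)^2 * y ≤ 2 := by nlinarith only [hcyN, hN2y, hz]
    -- c² ≤ 2D, |c| ≤ 2D
    have hcD : (c:ℝ)^2 ≤ 2 * D := by nlinarith only [hcy2, hyD, hz, hD0, sq_nonneg (c:ℝ)]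
    have hcabs : |(c:ℝ)| ≤ 2 * D := by nlinarith only [hc1, hcD, _root_.sq_abs ((c:ℝ)), abs_nonneg (c:ℝ)]
    -- y ≤ 2
    have hy2 : y ≤ 2 := by nlinarith only [hcy2, hc2, hz]
    -- |c x + d| ≤ 2
    have hcxd : |(c:ℝ) * x + d| ≤ 2 := by
      have hsq : ((c:ℝ)*x + d)^2 ≤ 4 := by
        have : ((c:ℝ)*x+d)^2 ≤ N := by rw [hNre, hure, huim]; nlinarith only [sq_nonneg ((c:ℝ)*y)]
        nlinarith only [this, hN2y, hy2]
      rw [abs_le]; constructor <;> nlinarith only [hsq]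
    have hdabs : |(d:ℝ)| ≤ 4 * D^2 := by
      have : |(d:ℝ)| ≤ |(c:ℝ)*x + d| + |(c:ℝ)| * |x| := by
        calc |(d:ℝ)| = |((c:ℝ)*x + d) - (c:ℝ)*x| := by ring_nf
          _ ≤ |(c:ℝ)*x + d| + |(c:ℝ)*x| := abs_sub _ _
          _ = |(c:ℝ)*x + d| + |(c:ℝ)| * |x| := by rw [abs_mul]
      nlinarith only [this, hcxd, hcabs, hDx, hD1, abs_nonneg (c:ℝ), abs_nonneg x]
    -- w.im ≤ D
    have hwimD : w.im ≤ D := by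
      have h1' : w.im * y ≤ 1 := by
        nlinarith only [him, hcyN, hc2, hw0, hz, mul_nonneg hw0.le (sq_nonneg y)]
      nlinarith only [h1', hyD, hw0, hz, hD0]
    -- 1/N = w.im / y and |a - c w| bound
    have hacw : ((a:ℂ) - c * w) * u = 1 := by
      have hdetC : (a:ℂ) * d - b * c = 1 := by exact_mod_cast hdet
      rw [hw_def, moebius, hu_def]
      field_simp [hu']
      linear_combination hdetC
    have hnsq : Complex.normSq ((a:ℂ) - c * w) * N = 1 := by
      rw [hN_def, ← Complex.normSq_mul, hacw, Complex.normSq_one]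
    have hre_im : Complex.normSq ((a:ℂ) - c * w) = ((a:ℝ) - c * w.re)^2 + ((c:ℝ) * w.im)^2 := by
      rw [Complex.normSq_apply]
      simp [Complex.sub_re, Complex.sub_im, Complex.mul_re, Complex.mul_im]
      ring
    have hND2 : 1 ≤ N * D^2 := by
      have hyD' : 1 ≤ (w.im * N) * D := by rw [him]; exact hyD
      nlinarith only [hyD', mul_nonneg (mul_nonneg (sub_nonneg.mpr hwimD) hN0.le) hD0.le]
    have hasq : ((a:ℝ) - c * w.re)^2 ≤ D^2 := by
      have : (((a:ℝ) - c * w.re)^2 + ((c:ℝ) * w.im)^2) * N = 1 := by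
        rw [← hre_im]; exact hnsq
      nlinarith only [this, hND2, hN0, mul_nonneg (sq_nonneg ((c:ℝ) * w.im)) hN0.le, mul_nonneg (sq_nonneg ((a:ℝ) - c*w.re)) hN0.le, hD0]
    have haabs : |(a:ℝ)| ≤ 2 * D := by
      have h1' : |(a:ℝ) - c * w.re| ≤ D := by
        rw [abs_le]; constructor <;> nlinarith only [hasq, hD0]
      have h2' : |(a:ℝ)| ≤ |(a:ℝ) - c * w.re| + |(c:ℝ)| * |w.re| := by
        calc |(a:ℝ)| = |((a:ℝ) - c*w.re) + (c:ℝ)*w.re| := by ring_nf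
          _ ≤ |(a:ℝ) - c*w.re| + |(c:ℝ)*w.re| := abs_add_le _ _
          _ = |(a:ℝ) - c*w.re| + |(c:ℝ)| * |w.re| := by rw [abs_mul]
      nlinarith only [h1', h2', hcabs, hwre, abs_nonneg (c:ℝ), abs_nonneg w.re, hD0]
    -- |b| bound
    have hbabs : |(b:ℝ)| ≤ 9 * D^2 := by
      have hb_eq : (b:ℂ) = w * u - a * z := by linear_combination -hwu
      have habs_b : ‖(b:ℂ)‖ = |(b:ℝ)| := by
        rw [show ((b:ℂ)) = ((b:ℝ):ℂ) by push_cast; rfl, Complex.norm_real, Real.norm_eq_abs]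
      have habs_a : ‖(a:ℂ)‖ = |(a:ℝ)| := by
        rw [show ((a:ℂ)) = ((a:ℝ):ℂ) by push_cast; rfl, Complex.norm_real, Real.norm_eq_abs]
      have hu2 : ‖u‖ ≤ 2 := by
        have : ‖u‖ ^ 2 = N := by rw [hN_def, Complex.sq_norm]
        nlinarith only [this, hN2y, hy2, norm_nonneg u]
      have hwabs' : ‖w‖ ≤ 1/2 + D :=
        le_trans (Complex.norm_le_abs_re_add_abs_im w)
          (by rw [abs_of_pos hw0]; nlinarith only [hwre, hwimD])
      have hzabs : ‖z‖ ≤ D + 2 := by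
        refine le_trans (Complex.norm_le_abs_re_add_abs_im z) ?_
        rw [← hx_def, ← hy_def, abs_of_pos hz]
        nlinarith only [hDx, hy2]
      calc |(b:ℝ)| = ‖(b:ℂ)‖ := habs_b.symm
        _ = ‖w * u - a * z‖ := by rw [hb_eq]
        _ ≤ ‖w * u‖ + ‖(a:ℂ) * z‖ := norm_sub_le _ _
        _ = ‖w‖ * ‖u‖ + |(a:ℝ)| * ‖z‖ := by
            rw [norm_mul, norm_mul, habs_a]
        _ ≤ (1/2 + D) * 2 + (2*D) * (D + 2) := by
            nlinarith only [hwabs', hu2, haabs, hzabs, hD0,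
              norm_nonneg w, norm_nonneg u, norm_nonneg z,
              abs_nonneg ((a:ℝ))]
        _ ≤ 9 * D^2 := by nlinarith only [hD1]
    rw [matHeight]
    exact max_le h9 (max_le (by nlinarith only [haabs, hD1]) (max_le hbabs
      (max_le (by nlinarith only [hcabs, hD1]) (by nlinarith only [hdabs, hD1]))))

/-- Height bound for matrices translating `z` into the closed fundamental domain:
`264·D(z)⁹` if `z` is not in the `SL₂(ℤ)`-orbit of `ζ = e^{2πi/6}`, and
`1056·D(z)⁹` if it is. -/
theorem height_of_translating_matrix (z : ℂ) (hz : 0 < z.im) :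
    (¬ inOrbitZeta z →
      ∀ a b c d : ℤ, a * d - b * c = 1 → inFD (moebius a b c d z) →
        matHeight a b c d ≤ 264 * Dfun z ^ 9) ∧
    (inOrbitZeta z →
      ∀ a b c d : ℤ, a * d - b * c = 1 → inFD (moebius a b c d z) →
        matHeight a b c d ≤ 1056 * Dfun z ^ 9) := by
  have hD1 : 1 ≤ Dfun z := le_max_left _ _
  have hpow : Dfun z ^ 2 ≤ Dfun z ^ 9 := pow_le_pow_right₀ hD1 (by norm_num)
  have hpow9 : 0 < Dfun z ^ 9 := pow_pos (lt_of_lt_of_le one_pos hD1) 9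
  constructor <;> intro _ a b c d hdet hFD <;>
    have h := key_height_bound z hz a b c d hdet hFD <;> nlinarith [h, hpow, hpow9]
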